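/- Let p be a prime and let B ⊆ ℝ/ℤ be a ball (an open arc of positive length). For n ∈ ℕ, let φ^B(n) = #{a ∈ ℕ : 1 ≤ a ≤ n, gcd(a,n) = 1, and a/n (viewed in [0,1]) is a representative of a point of B}. Then there exist N₀ ∈ ℕ and a constant C > 0 such that for all N ≥ N₀, Σ_{1 ≤ n ≤ N, p ∤ n} φ^B(n) ≥ C·N². -/

import Mathlib

set_option maxHeartbeats 1600000

open Finset

/-- `φ^B(n)`: the number of `a` with `1 ≤ a ≤ n`, `gcd(a,n) = 1`, whose class
`a/n + ℤ` lies in `B ⊆ ℝ/ℤ`. -/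
noncomputable def phiB (B : Set UnitAddCircle) (n : ℕ) : ℕ :=
  Set.ncard {a : ℕ | 1 ≤ a ∧ a ≤ n ∧ Nat.Coprime a n ∧
    (((a : ℝ) / (n : ℝ)) : UnitAddCircle) ∈ B}

private lemma castSubGe (m n : ℕ) : (m:ℝ) - n ≤ ((m - n : ℕ):ℝ) := by
  rcases le_total n m with h|h
  · rw [Nat.cast_sub h]
  · rw [Nat.sub_eq_zero_of_le h]
    simp only [Nat.cast_zero]
    have : (m:ℝ) ≤ n := by exact_mod_cast h
    linarith

private lemma sumOddIte (N : ℕ) :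
    ∑ n ∈ Finset.Icc 1 N, (if Odd n then n else 0) = ((N + 1) / 2) ^ 2 := by
  induction N with
  | zero => simp
  | succ N ih =>
      rw [Finset.sum_Icc_succ_top (by omega), ih]
      rcases Nat.even_or_odd N with ⟨m, rfl⟩ | ⟨m, rfl⟩
      · have h1 : Odd (m + m + 1) := ⟨m, by ring⟩
        rw [if_pos h1]
        have e1 : (m + m + 1 + 1) / 2 = m + 1 := by omega
        have e2 : (m + m + 1) / 2 = m := by omega
        rw [e1, e2]; ring
      · have h1 : ¬ Odd (2 * m + 1 + 1) := by
          rw [Nat.odd_iff]; omega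
        rw [if_neg h1]
        have e1 : (2 * m + 1 + 1 + 1) / 2 = m + 1 := by omega
        have e2 : (2 * m + 1 + 1) / 2 = m + 1 := by omega
        rw [e1, e2]; ring

private lemma sumInvLe (N : ℕ) : ∑ n ∈ Finset.Icc 1 N, (1:ℝ)/n ≤ 2 * Real.sqrt N := by
  induction N with
  | zero => simp
  | succ N ih =>
      rw [Finset.sum_Icc_succ_top (by omega)]
      have h1 : Real.sqrt N ≤ Real.sqrt ((N:ℝ)+1) := Real.sqrt_le_sqrt (by linarith)
      have h2 : Real.sqrt ((N:ℝ)+1) ^ 2 = (N:ℝ)+1 := Real.sq_sqrt (by positivity)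
      have h3 : Real.sqrt N ^ 2 = (N:ℝ) := Real.sq_sqrt (by positivity)
      have h4 : (0:ℝ) ≤ Real.sqrt N := Real.sqrt_nonneg _
      have h45 : (0:ℝ) ≤ Real.sqrt ((N:ℝ)+1) := Real.sqrt_nonneg _
      have h5 : Real.sqrt ((N:ℝ)+1) ≤ (N:ℝ)+1 := by nlinarith
      have e : (Real.sqrt ((N:ℝ)+1) - Real.sqrt N) * (Real.sqrt ((N:ℝ)+1) + Real.sqrt N) = 1 := by
        nlinarith
      have key : 1/((N:ℝ)+1) ≤ 2*(Real.sqrt ((N:ℝ)+1) - Real.sqrt N) := by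
        rw [div_le_iff₀ (by positivity)]
        nlinarith
      push_cast
      linarith

private lemma sumIdIcc (K : ℕ) : ∑ m ∈ Finset.Icc 1 K, (m:ℝ) = K*(K+1)/2 := by
  induction K with
  | zero => simp
  | succ K ih =>
      rw [Finset.sum_Icc_succ_top (by omega), ih]
      push_cast; ring

private lemma telescope (J : ℕ) :
    ∑ j ∈ Finset.Icc 1 J, ((1:ℝ)/(j:ℝ) - 1/((j:ℝ)+1)) = 1 - 1/((J:ℝ)+1) := by
  induction J with
  | zero => simp
  | succ J ih =>
      rw [Finset.sum_Icc_succ_top (by omega), ih]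
      push_cast
      ring

private lemma sumInvSqOdd (N : ℕ) :
    ∑ q ∈ (Finset.Icc 1 N).filter (fun q => Odd q ∧ 3 ≤ q), (1:ℝ)/(q:ℝ)^2 ≤ 1/4 := by
  have himg : (Finset.Icc 1 N).filter (fun q => Odd q ∧ 3 ≤ q)
      = Finset.image (fun j => 2*j+1) (Finset.Icc 1 ((N-1)/2)) := by
    ext q
    simp only [Finset.mem_filter, Finset.mem_Icc, Finset.mem_image, Nat.odd_iff]
    constructor
    · rintro ⟨⟨h1,h2⟩,h3,h4⟩; exact ⟨q/2, by omega, by omega⟩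
    · rintro ⟨j, ⟨hj1,hj2⟩, rfl⟩
      refine ⟨⟨by omega, by omega⟩, by omega, by omega⟩
  rw [himg, Finset.sum_image (by intro a _ b _ h; simp only at h; omega)]
  have step : ∀ j ∈ Finset.Icc 1 ((N-1)/2),
      (1:ℝ)/((2*j+1:ℕ):ℝ)^2 ≤ (1/4) * ((1:ℝ)/(j:ℝ) - 1/((j:ℝ)+1)) := by
    intro j hj
    simp only [Finset.mem_Icc] at hj
    have hj1 : (1:ℝ) ≤ (j:ℝ) := by exact_mod_cast hj.1
    have heq : (1/4) * ((1:ℝ)/(j:ℝ) - 1/((j:ℝ)+1)) = 1/(4*(j:ℝ)*((j:ℝ)+1)) := by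
      field_simp; ring
    rw [heq]
    have hb : (0:ℝ) < 4*(j:ℝ)*((j:ℝ)+1) := by positivity
    apply one_div_le_one_div_of_le hb
    push_cast
    nlinarith
  calc ∑ j ∈ Finset.Icc 1 ((N-1)/2), (1:ℝ)/((2*j+1:ℕ):ℝ)^2
      ≤ ∑ j ∈ Finset.Icc 1 ((N-1)/2), (1/4) * ((1:ℝ)/(j:ℝ) - 1/((j:ℝ)+1)) :=
        Finset.sum_le_sum step
    _ = (1/4) * ∑ j ∈ Finset.Icc 1 ((N-1)/2), ((1:ℝ)/(j:ℝ) - 1/((j:ℝ)+1)) := by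
        rw [Finset.mul_sum]
    _ ≤ 1/4 := by
        rw [telescope]
        have : (0:ℝ) < ((((N-1)/2 : ℕ)):ℝ)+1 := by positivity
        have h1 : (0:ℝ) ≤ 1/(((((N-1)/2 : ℕ)):ℝ)+1) := by positivity
        linarith

private lemma filterDvdImage (q N : ℕ) (hq : 1 ≤ q) :
    (Finset.Icc 1 N).filter (fun n => q ∣ n)
      = Finset.image (fun m => q * m) (Finset.Icc 1 (N / q)) := by
  ext n
  simp only [Finset.mem_filter, Finset.mem_Icc, Finset.mem_image]
  constructor
  · rintro ⟨⟨h1, h2⟩, k, rfl⟩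
    have hk0 : 1 ≤ k := by
      rcases Nat.eq_zero_or_pos k with rfl | h
      · simp at h1
      · exact h
    have hk2 : k ≤ N / q := (Nat.le_div_iff_mul_le (by omega)).mpr (by rw [mul_comm]; exact h2)
    exact ⟨k, ⟨hk0, hk2⟩, rfl⟩
  · rintro ⟨m, ⟨hm1, hm2⟩, rfl⟩
    have hqm : m * q ≤ N := (Nat.le_div_iff_mul_le (by omega)).mp hm2
    exact ⟨⟨by nlinarith, by rw [mul_comm]; exact hqm⟩, ⟨m, rfl⟩⟩

private lemma filterOddDvdImage (p N : ℕ) (hp : 1 ≤ p) (hpo : Odd p) :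
    (Finset.Icc 1 N).filter (fun n => Odd n ∧ p ∣ n)
      = Finset.image (fun m => p * m) ((Finset.Icc 1 (N / p)).filter Odd) := by
  ext n
  simp only [Finset.mem_filter, Finset.mem_Icc, Finset.mem_image]
  constructor
  · rintro ⟨⟨h1, h2⟩, hodd, k, rfl⟩
    have hk0 : 1 ≤ k := by
      rcases Nat.eq_zero_or_pos k with rfl | h
      · simp at h1
      · exact h
    have hk2 : k ≤ N / p := (Nat.le_div_iff_mul_le (by omega)).mpr (by rw [mul_comm]; exact h2)
    have hko : Odd k := ((Nat.odd_mul).mp hodd).2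
    exact ⟨k, ⟨⟨hk0, hk2⟩, hko⟩, rfl⟩
  · rintro ⟨m, ⟨⟨hm1, hm2⟩, hmo⟩, rfl⟩
    have hqm : m * p ≤ N := (Nat.le_div_iff_mul_le (by omega)).mp hm2
    exact ⟨⟨by nlinarith, by rw [mul_comm]; exact hqm⟩, Nat.odd_mul.mpr ⟨hpo, hmo⟩, ⟨m, rfl⟩⟩

private lemma cardDvdIoc (q L U : ℕ) (hq : 1 ≤ q) :
    ((Finset.Ioc L U).filter (fun a => q ∣ a)).card ≤ U / q - L / q := by
  have hsub : (Finset.Ioc L U).filter (fun a => q ∣ a)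
      ⊆ Finset.image (fun m => q * m) (Finset.Ioc (L/q) (U/q)) := by
    intro a ha
    simp only [Finset.mem_filter, Finset.mem_Ioc] at ha
    obtain ⟨⟨h1, h2⟩, k, rfl⟩ := ha
    simp only [Finset.mem_image, Finset.mem_Ioc]
    refine ⟨k, ⟨?_, ?_⟩, rfl⟩
    · by_contra h
      push_neg at h
      have h3 : q * k ≤ q * (L/q) := Nat.mul_le_mul_left q h
      have h4 : q * (L/q) ≤ L := by
        rw [mul_comm]; exact Nat.div_mul_le_self L q
      omega
    · exact (Nat.le_div_iff_mul_le (by omega)).mpr (by rw [mul_comm]; exact h2)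
  calc ((Finset.Ioc L U).filter (fun a => q ∣ a)).card
      ≤ (Finset.image (fun m => q * m) (Finset.Ioc (L/q) (U/q))).card :=
        Finset.card_le_card hsub
    _ ≤ (Finset.Ioc (L/q) (U/q)).card := Finset.card_image_le
    _ = U / q - L / q := Nat.card_Ioc _ _

/-- From a ball of positive radius in `ℝ/ℤ` we get an interval `(α,β) ⊆ [0,1]`
all of whose points map into the ball. -/
private lemma existsInterval (B : Set UnitAddCircle)
    (hB : ∃ x r, 0 < r ∧ B = Metric.ball x r) :
    ∃ α β : ℝ, 0 ≤ α ∧ β ≤ 1 ∧ 0 < β - α ∧ β - α ≤ 1/4 ∧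
      ∀ t : ℝ, α < t → t < β → ((t : ℝ) : UnitAddCircle) ∈ B := by
  obtain ⟨x, r, hr, rfl⟩ := hB
  obtain ⟨y, rfl⟩ := QuotientAddGroup.mk_surjective x
  set x₀ : ℝ := Int.fract y with hx₀def
  have hx₀ : ((x₀ : ℝ) : UnitAddCircle) = (y : UnitAddCircle) := by
    have : ((x₀ : ℝ) : UnitAddCircle) - (y : UnitAddCircle) = 0 := by
      rw [← AddCircle.coe_sub]
      have hxy : x₀ - y = -(⌊y⌋ : ℝ) := by
        rw [hx₀def, Int.fract]; ring
      rw [hxy]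
      rw [AddCircle.coe_eq_zero_iff]
      exact ⟨-⌊y⌋, by simp⟩
    linear_combination (norm := skip) this
    rw [sub_eq_zero] at this
    rw [this]
    abel
  have h0 : 0 ≤ x₀ := Int.fract_nonneg y
  have h1 : x₀ < 1 := Int.fract_lt_one y
  set ρ : ℝ := min r (1/4) with hρdef
  have hρ0 : 0 < ρ := lt_min hr (by norm_num)
  have hρ4 : ρ ≤ 1/4 := min_le_right _ _
  have hρr : ρ ≤ r := min_le_left _ _
  have key : ∀ t : ℝ, |t - x₀| < ρ → ((t : ℝ) : UnitAddCircle) ∈ Metric.ball ((y:ℝ) : UnitAddCircle) r := by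
    intro t ht
    rw [Metric.mem_ball, ← hx₀, dist_eq_norm, ← AddCircle.coe_sub, UnitAddCircle.norm_eq]
    have hround : round (t - x₀) = 0 := by
      rw [round_eq_zero_iff]
      constructor
      · have := abs_lt.mp ht; linarith
      · have := abs_lt.mp ht; linarith
    rw [hround]
    push_cast
    rw [sub_zero]
    exact lt_of_lt_of_le ht hρr
  rcases lt_or_ge x₀ (1/2) with hc | hc
  · refine ⟨x₀, x₀ + ρ, h0, by linarith, by linarith, by linarith, ?_⟩
    intro t ht1 ht2
    apply key
    rw [abs_lt]
    constructor <;> linarith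
  · refine ⟨x₀ - ρ, x₀, by linarith, by linarith, by linarith, by linarith, ?_⟩
    intro t ht1 ht2
    apply key
    rw [abs_lt]
    constructor <;> linarith

/-- The per-`n` lower bound. -/
private lemma phiBLower (B : Set UnitAddCircle) (α β : ℝ)
    (hα : 0 ≤ α) (hβ : β ≤ 1) (hαβ : α < β)
    (hmem : ∀ t : ℝ, α < t → t < β → ((t : ℝ) : UnitAddCircle) ∈ B)
    (n : ℕ) (hn : 1 ≤ n) :
    ((β - α) * n - 1) - ∑ q ∈ n.primeFactors, ((β - α) * n / q + 2) ≤ (phiB B n : ℝ) := by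
  set δ := β - α with hδ
  have hδ0 : 0 < δ := by rw [hδ]; linarith
  set L := ⌊α * n⌋₊ with hL
  set U := ⌈β * n⌉₊ - 1 with hU
  set G := Finset.Ioc L U with hG
  have hn0 : (0:ℝ) < n := by exact_mod_cast hn
  have hαn : (0:ℝ) ≤ α * n := by positivity
  have hβ0 : (0:ℝ) < β := lt_of_le_of_lt hα hαβ
  have hβn : (0:ℝ) ≤ β * n := by positivity
  set Gc := G.filter (fun a => a.Coprime n) with hGc
  set Gb := G.filter (fun a => ¬ a.Coprime n) with hGb
  -- (i) Gc.card ≤ phiB B n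
  have hUb : ((U:ℕ):ℝ) ≤ β * n := by
    rcases Nat.eq_zero_or_pos ⌈β * n⌉₊ with h|h
    · rw [hU, h]; simp [hβn]
    · have e : ((U:ℕ):ℝ) = ((⌈β*n⌉₊:ℕ):ℝ) - 1 := by
        rw [hU, Nat.cast_sub h]; norm_num
      have := Nat.ceil_lt_add_one hβn
      linarith
  have hLb : α * n - 1 ≤ ((L:ℕ):ℝ) := by
    have := Nat.lt_floor_add_one (α * n)
    have h2 : α * n < ((L:ℕ):ℝ) + 1 := by exact_mod_cast this
    linarith
  have hsubset : ↑Gc ⊆ {a : ℕ | 1 ≤ a ∧ a ≤ n ∧ Nat.Coprime a n ∧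
      (((a : ℝ) / (n : ℝ)) : UnitAddCircle) ∈ B} := by
    intro a ha
    simp only [hGc, Finset.coe_filter, Set.mem_setOf_eq, Finset.mem_Ioc, hG] at ha
    obtain ⟨⟨haL, haU⟩, hacop⟩ := ha
    have ha1 : 1 ≤ a := by omega
    have hαa : α * n < a := by
      have := (Nat.floor_lt hαn).mp haL
      exact this
    have haβ : (a:ℝ) < β * n := by
      have h6 : (a:ℝ) ≤ ((U:ℕ):ℝ) := by exact_mod_cast haU
      have hUceil : 1 ≤ ⌈β * n⌉₊ := by omega
      have h7 : ((U:ℕ):ℝ) = ((⌈β * n⌉₊:ℕ):ℝ) - 1 := by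
        rw [hU, Nat.cast_sub hUceil]; norm_num
      have h8 : ((⌈β * n⌉₊:ℕ):ℝ) < β * n + 1 := Nat.ceil_lt_add_one hβn
      linarith
    have han : a ≤ n := by
      have h9 : (a:ℝ) < (n:ℝ) := lt_of_lt_of_le haβ (by nlinarith)
      exact_mod_cast h9.le
    refine ⟨ha1, han, hacop, ?_⟩
    apply hmem
    · rw [lt_div_iff₀ hn0]; exact hαa
    · rw [div_lt_iff₀ hn0]; exact haβ
  have hfin : {a : ℕ | 1 ≤ a ∧ a ≤ n ∧ Nat.Coprime a n ∧
      (((a : ℝ) / (n : ℝ)) : UnitAddCircle) ∈ B}.Finite :=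
    Set.Finite.subset (Set.finite_Icc 1 n) (fun a ha => Set.mem_Icc.mpr ⟨ha.1, ha.2.1⟩)
  have hi : (Gc.card : ℝ) ≤ (phiB B n : ℝ) := by
    have h10 := Set.ncard_le_ncard hsubset hfin
    rw [Set.ncard_coe_finset] at h10
    unfold phiB
    exact_mod_cast h10
  -- (ii) cards
  have hcards : (G.card : ℝ) = (Gc.card : ℝ) + (Gb.card : ℝ) := by
    have := Finset.card_filter_add_card_filter_not
      (s := G) (p := fun a => a.Coprime n)
    rw [hGc, hGb]
    exact_mod_cast this.symm
  have hGcard : δ * n - 1 ≤ (G.card : ℝ) := by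
    rw [hG, Nat.card_Ioc]
    have l2 : β * n - 1 ≤ ((U:ℕ):ℝ) := by
      have h11 := Nat.le_ceil (β * n)
      have h12 := castSubGe ⌈β * n⌉₊ 1
      rw [← hU] at h12
      push_cast at h12 ⊢
      linarith
    have l1 : ((L:ℕ):ℝ) ≤ α * n := Nat.floor_le hαn
    have := castSubGe U L
    rw [hδ]
    linarith
  -- (iii) bad count
  have hGb2 : (Gb.card : ℝ) ≤ ∑ q ∈ n.primeFactors, (δ * n / q + 2) := by
    have hbsub : Gb ⊆ n.primeFactors.biUnion (fun q => G.filter (fun a => q ∣ a)) := by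
      intro a ha
      rw [hGb, Finset.mem_filter] at ha
      obtain ⟨haG, hnc⟩ := ha
      have hg0 : 0 < Nat.gcd a n := Nat.gcd_pos_of_pos_right a (by omega)
      obtain ⟨q, hq, hqd⟩ := Nat.exists_prime_and_dvd (n := Nat.gcd a n) (by
        intro h; exact hnc h)
      rw [Finset.mem_biUnion]
      exact ⟨q, Nat.mem_primeFactors.mpr ⟨hq, hqd.trans (Nat.gcd_dvd_right a n), by omega⟩,
        Finset.mem_filter.mpr ⟨haG, hqd.trans (Nat.gcd_dvd_left a n)⟩⟩
    have h1 : (Gb.card:ℝ) ≤ ∑ q ∈ n.primeFactors, ((G.filter (fun a => q ∣ a)).card : ℝ) := by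
      have h13 := (Finset.card_le_card hbsub).trans Finset.card_biUnion_le
      exact_mod_cast h13
    refine h1.trans (Finset.sum_le_sum ?_)
    intro q hq
    have hqp : q.Prime := Nat.prime_of_mem_primeFactors hq
    have hq1 : 1 ≤ q := hqp.pos
    have hc := cardDvdIoc q L U hq1
    have hq0 : (0:ℝ) < q := by exact_mod_cast hqp.pos
    rcases le_or_gt (U/q) (L/q) with hcase|hcase
    · have hz : U/q - L/q = 0 := by omega
      rw [hz] at hc
      have hcc : ((G.filter (fun a => q ∣ a)).card : ℝ) ≤ 0 := by exact_mod_cast hc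
      have hpos : (0:ℝ) ≤ δ * n / q + 2 := by positivity
      linarith
    · have hcast : ((U/q - L/q : ℕ):ℝ) = ((U/q:ℕ):ℝ) - ((L/q:ℕ):ℝ) :=
        Nat.cast_sub hcase.le
      have hu : ((U/q:ℕ):ℝ) ≤ (U:ℝ)/q := Nat.cast_div_le
      have hl : ((L:ℝ) - q + 1)/q ≤ ((L/q:ℕ):ℝ) := by
        have hmod := Nat.div_add_mod L q
        have hmlt : L % q < q := Nat.mod_lt _ (by omega)
        have hℕ : L + 1 ≤ q * (L/q) + q := by omega
        have hcastℕ : (L:ℝ) + 1 ≤ (q:ℝ) * ((L/q:ℕ):ℝ) + q := by exact_mod_cast hℕ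
        rw [div_le_iff₀ hq0]
        linarith
    -- combine
      have hmain : (U:ℝ)/q - ((L:ℝ) - q + 1)/q ≤ δ * n / q + 1 := by
        have h9 : (U:ℝ) - ((L:ℝ) - q + 1) ≤ δ * n + q := by
          rw [hδ]; linarith
        have h14 : (U:ℝ)/q - ((L:ℝ) - q + 1)/q = ((U:ℝ) - ((L:ℝ) - q + 1))/q := by ring
        rw [h14]
        calc ((U:ℝ) - ((L:ℝ) - q + 1))/q ≤ (δ * n + q)/q := by gcongr
          _ = δ * n / q + 1 := by field_simp
      have hcc : ((G.filter (fun a => q ∣ a)).card : ℝ) ≤ ((U/q - L/q : ℕ) : ℝ) := by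
        exact_mod_cast hc
      rw [hcast] at hcc
      linarith
  clear_value δ L U G Gc Gb
  linarith

theorem statement14 (p : ℕ) (hp : p.Prime)
    (B : Set UnitAddCircle) (hB : ∃ x r, 0 < r ∧ B = Metric.ball x r) :
    ∃ N₀ : ℕ, ∃ C : ℝ, 0 < C ∧ ∀ N ≥ N₀,
      C * (N : ℝ) ^ 2 ≤ ∑ n ∈ Finset.Icc 1 N, (if p ∣ n then 0 else (phiB B n : ℝ)) := by
  obtain ⟨α, β, hα, hβ, hδpos, hδ4, hmem⟩ := existsInterval B hB
  set δ := β - α with hδdef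
  clear_value δ
  refine ⟨⌈(384/δ)^2⌉₊ + 1, δ/48, div_pos hδpos (by norm_num), ?_⟩
  intro N hN
  have hN1 : 1 ≤ N := by omega
  have hN0' : (0:ℝ) ≤ N := by positivity
  have hNR : ((384/δ)^2 : ℝ) ≤ N := by
    have h1 : (⌈(384/δ)^2⌉₊ : ℝ) ≤ N := by
      have : ⌈(384/δ)^2⌉₊ ≤ N := by omega
      exact_mod_cast this
    exact (Nat.le_ceil _).trans h1
  have hNR1 : (1:ℝ) ≤ N := by exact_mod_cast hN1
  have hsN0 : (0:ℝ) ≤ Real.sqrt N := Real.sqrt_nonneg _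
  have hss : Real.sqrt N * Real.sqrt N = N := Real.mul_self_sqrt hN0'
  have hsN1 : (1:ℝ) ≤ Real.sqrt N := by
    nlinarith
  have hsqrt : 384/δ ≤ Real.sqrt N := by
    rw [show (384:ℝ)/δ = Real.sqrt ((384/δ)^2) from
      (Real.sqrt_sq (div_pos (by norm_num) hδpos).le).symm]
    exact Real.sqrt_le_sqrt hNR
  have hsqrt' : (384:ℝ) ≤ δ * Real.sqrt N := by
    rw [div_le_iff₀ hδpos] at hsqrt
    linarith [hsqrt]
  have hterm : ∀ (a b : ℕ), (0:ℝ) ≤ δ*(a:ℝ)/(b:ℝ) + 2 := by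
    intro a b
    have h1 : (0:ℝ) ≤ δ*(a:ℝ)/(b:ℝ) :=
      div_nonneg (mul_nonneg hδpos.le (Nat.cast_nonneg _)) (Nat.cast_nonneg _)
    linarith
  set F := (Finset.Icc 1 N).filter (fun n => Odd n ∧ ¬ p ∣ n) with hF
  -- Step 1
  have step1 : ∑ n ∈ F, (phiB B n : ℝ)
      ≤ ∑ n ∈ Finset.Icc 1 N, (if p ∣ n then 0 else (phiB B n : ℝ)) := by
    have e : ∑ n ∈ F, (phiB B n : ℝ) = ∑ n ∈ F, (if p ∣ n then 0 else (phiB B n : ℝ)) := by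
      apply Finset.sum_congr rfl
      intro n hn
      rw [hF, Finset.mem_filter] at hn
      rw [if_neg hn.2.2]
    rw [e, hF]
    apply Finset.sum_le_sum_of_subset_of_nonneg (Finset.filter_subset _ _)
    intro i _ _
    split <;> positivity
  -- Step 2
  have step2 : ∑ n ∈ F, ((δ * n - 1) - ∑ q ∈ n.primeFactors, (δ * n / q + 2))
      ≤ ∑ n ∈ F, (phiB B n : ℝ) := by
    apply Finset.sum_le_sum
    intro n hn
    rw [hF, Finset.mem_filter, Finset.mem_Icc] at hn
    have hαβ : α < β := by
      have h1 := hδdef.ge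
      have h2 := hδdef.le
      linarith
    have h := phiBLower B α β hα hβ hαβ hmem n hn.1.1
    rw [← hδdef] at h
    exact h
  -- main sum over odds
  have hcast_odd : ∀ M : ℕ, ∑ n ∈ (Finset.Icc 1 M).filter (fun n => Odd n), (n:ℝ)
      = ((((M+1)/2 : ℕ)):ℝ)^2 := by
    intro M
    rw [Finset.sum_filter]
    exact_mod_cast congrArg (Nat.cast (R := ℝ)) (sumOddIte M)
  have hhalf : ∀ M : ℕ, (M:ℝ)/2 ≤ (((M+1)/2 : ℕ) : ℝ) := by
    intro M
    have h : M ≤ 2 * ((M+1)/2) := by omega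
    have h2 : (M:ℝ) ≤ 2 * (((M+1)/2 : ℕ) : ℝ) := by exact_mod_cast h
    linarith
  have hhalf' : ∀ M : ℕ, (((M+1)/2 : ℕ) : ℝ) ≤ ((M:ℝ)+1)/2 := by
    intro M
    have h : 2 * ((M+1)/2) ≤ M + 1 := by omega
    have h2 : 2 * (((M+1)/2 : ℕ) : ℝ) ≤ (M:ℝ) + 1 := by exact_mod_cast h
    linarith
  have hOdd : (N:ℝ)^2/4 ≤ ∑ n ∈ (Finset.Icc 1 N).filter (fun n => Odd n), (n:ℝ) := by
    rw [hcast_odd N]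
    have := hhalf N
    nlinarith [this, hN0']
  -- S_p bound
  have hSp : ∑ n ∈ (Finset.Icc 1 N).filter (fun n => Odd n ∧ p ∣ n), (n:ℝ)
      ≤ (N:ℝ)^2/12 + 3*N/4 := by
    rcases eq_or_ne p 2 with rfl|hp2
    · have he : (Finset.Icc 1 N).filter (fun n => Odd n ∧ 2 ∣ n) = ∅ := by
        rw [Finset.filter_eq_empty_iff]
        intro n _
        rw [Nat.odd_iff]
        omega
      rw [he]
      simp
      positivity
    · have hpodd : Odd p := hp.odd_of_ne_two hp2
      have hp3 : 3 ≤ p := by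
        have h := hp.two_le
        have ho := Nat.odd_iff.mp hpodd
        omega
      rw [filterOddDvdImage p N (by omega) hpodd]
      rw [Finset.sum_image (by
        intro a _ b _ h
        exact Nat.eq_of_mul_eq_mul_left hp.pos h)]
      set K := N / p with hK
      have e : ∑ m ∈ (Finset.Icc 1 K).filter (fun m => Odd m), ((p*m : ℕ):ℝ)
          = (p:ℝ) * ∑ m ∈ (Finset.Icc 1 K).filter (fun m => Odd m), (m:ℝ) := by
        rw [Finset.mul_sum]
        apply Finset.sum_congr rfl
        intro m _
        push_cast
        ring
      rw [e, hcast_odd K]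
      set c := (((K+1)/2 : ℕ) : ℝ) with hc
      have hc0 : (0:ℝ) ≤ c := by positivity
      have hcle : c ≤ ((K:ℝ)+1)/2 := hhalf' K
      rcases Nat.eq_zero_or_pos K with h|h
      · rw [hc, h]
        norm_num
        positivity
      · have hK1 : (1:ℝ) ≤ (K:ℝ) := by exact_mod_cast h
        have hpK : (p:ℝ) * K ≤ N := by
          have hh : p * K ≤ N := by
            rw [hK, mul_comm]
            exact Nat.div_mul_le_self N p
          exact_mod_cast hh
        have hp3' : (3:ℝ) ≤ p := by exact_mod_cast hp3
        have h6 : (p:ℝ) * c^2 ≤ (p:ℝ) * (((K:ℝ)+1)/2)^2 := by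
          apply mul_le_mul_of_nonneg_left _ (by positivity)
          nlinarith
        have h7 : (p:ℝ) * (((K:ℝ)+1)/2)^2 ≤ (N:ℝ)^2/12 + 3*N/4 := by
          have hKN3 : 3 * (K:ℝ) ≤ N := by nlinarith
          nlinarith [mul_le_mul_of_nonneg_right hpK (by linarith : (0:ℝ) ≤ (K:ℝ)),
            mul_le_mul_of_nonneg_left hKN3 hN0']
        linarith
  -- split sums
  have hsplit : ∑ n ∈ (Finset.Icc 1 N).filter (fun n => Odd n), (n:ℝ)
      = ∑ n ∈ (Finset.Icc 1 N).filter (fun n => Odd n ∧ p ∣ n), (n:ℝ)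
        + ∑ n ∈ F, (n:ℝ) := by
    rw [hF, ← Finset.sum_filter_add_sum_filter_not
      ((Finset.Icc 1 N).filter (fun n => Odd n)) (fun n => p ∣ n) (fun n => (n:ℝ))]
    rw [Finset.filter_filter, Finset.filter_filter]
  have hSF : (N:ℝ)^2/4 - ((N:ℝ)^2/12 + 3*N/4) ≤ ∑ n ∈ F, (n:ℝ) := by
    have := hsplit
    linarith [hOdd, hSp]
  have hcardF : ((F.card : ℕ):ℝ) ≤ N := by
    have h1 : F.card ≤ (Finset.Icc 1 N).card := Finset.card_filter_le _ _
    rw [Nat.card_Icc] at h1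
    have h2 : F.card ≤ N := by omega
    exact_mod_cast h2
  -- bad sum
  have hbad : ∑ n ∈ F, ∑ q ∈ n.primeFactors, (δ * n / q + 2)
      ≤ δ*(N:ℝ)^2/8 + 6*N*Real.sqrt N := by
    set Q := (Finset.Icc 1 N).filter (fun q => Odd q ∧ 3 ≤ q) with hQ
    have hstep : ∀ n ∈ F, ∑ q ∈ n.primeFactors, (δ*n/q + 2)
        ≤ ∑ q ∈ Q, (if q ∣ n then δ*n/q + 2 else 0) := by
      intro n hn
      rw [hF, Finset.mem_filter, Finset.mem_Icc] at hn
      obtain ⟨⟨hn1, hnN⟩, hodd, hnp⟩ := hn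
      rw [← Finset.sum_filter]
      apply Finset.sum_le_sum_of_subset_of_nonneg
      · intro q hq
        rw [Finset.mem_filter, hQ, Finset.mem_filter, Finset.mem_Icc]
        have hqp := Nat.prime_of_mem_primeFactors hq
        have hqd := Nat.dvd_of_mem_primeFactors hq
        have hqn : q ≤ n := Nat.le_of_dvd (by omega) hqd
        have hq2 : q ≠ 2 := by
          rintro rfl
          rw [Nat.odd_iff] at hodd
          obtain ⟨k, rfl⟩ := hqd
          omega
        have hqodd : Odd q := hqp.odd_of_ne_two hq2
        have hq3 : 3 ≤ q := by
          have := hqp.two_le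
          have := Nat.odd_iff.mp hqodd
          omega
        exact ⟨⟨⟨hqp.pos, le_trans hqn hnN⟩, hqodd, hq3⟩, hqd⟩
      · intro q _ _
        exact hterm _ _
    have h1 : ∑ n ∈ F, ∑ q ∈ n.primeFactors, (δ*n/q+2)
        ≤ ∑ q ∈ Q, ∑ n ∈ Finset.Icc 1 N, (if q ∣ n then δ*n/q + 2 else 0) := by
      refine le_trans (Finset.sum_le_sum hstep) ?_
      rw [← Finset.sum_comm]
      apply Finset.sum_le_sum
      intro q _
      rw [hF]
      apply Finset.sum_le_sum_of_subset_of_nonneg (Finset.filter_subset _ _)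
      intro i _ _
      split
      · exact hterm _ _
      · exact le_rfl
    have h2 : ∀ q ∈ Q, ∑ n ∈ Finset.Icc 1 N, (if q ∣ n then δ*n/q + 2 else 0)
        ≤ δ*(N:ℝ)^2/2 * (1/(q:ℝ)^2) + 3*N * (1/(q:ℝ)) := by
      intro q hq
      rw [hQ, Finset.mem_filter, Finset.mem_Icc] at hq
      obtain ⟨⟨hq1, hqN⟩, hqodd, hq3⟩ := hq
      have hq0 : (0:ℝ) < q := by
        have : (0:ℕ) < q := by omega
        exact_mod_cast this
      rw [← Finset.sum_filter, filterDvdImage q N (by omega)]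
      rw [Finset.sum_image (by
        intro a _ b _ h
        exact Nat.eq_of_mul_eq_mul_left (by omega) h)]
      set K := N / q with hK
      have e : ∀ m ∈ Finset.Icc 1 K, δ*((q*m : ℕ):ℝ)/q + 2 = δ*m + 2 := by
        intro m _
        push_cast
        field_simp
      have hsum2 : ∑ m ∈ Finset.Icc 1 K, (δ*(m:ℝ) + 2) = δ*((K:ℝ)*((K:ℝ)+1)/2) + 2*K := by
        rw [Finset.sum_add_distrib, ← Finset.mul_sum, sumIdIcc,
          Finset.sum_const, Nat.card_Icc]
        simp only [nsmul_eq_mul]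
        have hKK : ((K + 1 - 1 : ℕ):ℝ) = (K:ℝ) := by norm_num
        rw [hKK]
        ring
      rw [Finset.sum_congr rfl e, hsum2]
      have hKq : (K:ℝ)*q ≤ N := by
        have hh : K * q ≤ N := Nat.div_mul_le_self N q
        exact_mod_cast hh
      have hK0 : (0:ℝ) ≤ K := by positivity
      have hq3' : (3:ℝ) ≤ q := by exact_mod_cast hq3
      have hKq2 : ((K:ℝ)*q)*((K:ℝ)*q) ≤ (N:ℝ)*N := mul_self_le_mul_self (by positivity) hKq
      have hKqq : (K:ℝ)*q*q ≤ (N:ℝ)*q := by nlinarith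
      have hrhs : δ*(N:ℝ)^2/2 * (1/(q:ℝ)^2) + 3*N * (1/(q:ℝ))
          = (δ*(N:ℝ)^2/2 + 3*(N:ℝ)*q)/(q:ℝ)^2 := by
        field_simp
      rw [hrhs, le_div_iff₀ (by positivity)]
      have t2 : δ*((K:ℝ)*q*q) ≤ (1/4)*((N:ℝ)*q) := by
        nlinarith [mul_nonneg (by linarith : (0:ℝ) ≤ 1/4 - δ)
          (by positivity : (0:ℝ) ≤ (K:ℝ)*q*q), hKqq]
      have t1 : δ/2*(((K:ℝ)*q)*((K:ℝ)*q)) ≤ δ/2*((N:ℝ)*N) :=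
        mul_le_mul_of_nonneg_left hKq2 (by linarith)
      nlinarith [t1, t2, hKqq, mul_nonneg hN0' hq0.le]
    have h3 : ∑ q ∈ Q, (δ*(N:ℝ)^2/2 * (1/(q:ℝ)^2) + 3*N * (1/(q:ℝ)))
        ≤ δ*(N:ℝ)^2/8 + 6*N*Real.sqrt N := by
      rw [Finset.sum_add_distrib, ← Finset.mul_sum, ← Finset.mul_sum]
      have b1 : ∑ q ∈ Q, (1:ℝ)/(q:ℝ)^2 ≤ 1/4 := sumInvSqOdd N
      have b2 : ∑ q ∈ Q, (1:ℝ)/(q:ℝ) ≤ 2 * Real.sqrt N := by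
        refine le_trans ?_ (sumInvLe N)
        apply Finset.sum_le_sum_of_subset_of_nonneg (Finset.filter_subset _ _)
        intro i _ _
        positivity
      have c1 : δ*(N:ℝ)^2/2 * ∑ q ∈ Q, (1:ℝ)/(q:ℝ)^2 ≤ δ*(N:ℝ)^2/2 * (1/4) :=
        mul_le_mul_of_nonneg_left b1
          (div_nonneg (mul_nonneg hδpos.le (by positivity)) (by norm_num))
      have c2 : 3*(N:ℝ) * ∑ q ∈ Q, (1:ℝ)/(q:ℝ) ≤ 3*N * (2*Real.sqrt N) :=
        mul_le_mul_of_nonneg_left b2 (by positivity)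
      nlinarith [c1, c2]
    exact le_trans h1 (le_trans (Finset.sum_le_sum h2) h3)
  -- assembly
  have e3 : ∑ n ∈ F, (δ*(n:ℝ) - 1) = δ * (∑ n ∈ F, (n:ℝ)) - F.card := by
    rw [Finset.sum_sub_distrib, ← Finset.mul_sum, Finset.sum_const]
    simp
  have step2' : ∑ n ∈ F, (δ*(n:ℝ) - 1) - ∑ n ∈ F, ∑ q ∈ n.primeFactors, (δ * n / q + 2)
      ≤ ∑ n ∈ F, (phiB B n : ℝ) := by
    rw [← Finset.sum_sub_distrib]
    exact step2
  have hfinal1 : δ*(N:ℝ)^2/24 - 8*N*Real.sqrt N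
      ≤ ∑ n ∈ F, (phiB B n : ℝ) := by
    have hsf := hSF
    have m1 : δ * ((N:ℝ)^2/4 - ((N:ℝ)^2/12 + 3*N/4)) ≤ δ * ∑ n ∈ F, (n:ℝ) :=
      mul_le_mul_of_nonneg_left hsf hδpos.le
    have m2 : δ*(N:ℝ)^2/24 - 8*N*Real.sqrt N
        ≤ δ * ((N:ℝ)^2/4 - ((N:ℝ)^2/12 + 3*N/4)) - (N:ℝ) - (δ*(N:ℝ)^2/8 + 6*N*Real.sqrt N) := by
      nlinarith [hδpos.le, hδ4, hN0', hsN1, hNR1,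
        mul_le_mul_of_nonneg_left hsN1 hN0',
        mul_nonneg (by linarith : (0:ℝ) ≤ 1/4 - δ) hN0']
    linarith [m1, m2, hcardF, hbad, step2', e3.ge, e3.le]
  have hfinal2 : δ/48*(N:ℝ)^2 ≤ δ*(N:ℝ)^2/24 - 8*N*Real.sqrt N := by
    have key : 8*(N:ℝ)*Real.sqrt N ≤ δ*(N:ℝ)^2/48 := by
      have t : (0:ℝ) ≤ (N:ℝ)*Real.sqrt N*(δ*Real.sqrt N - 384) :=
        mul_nonneg (mul_nonneg hN0' hsN0) (by linarith)
      have t' : (N:ℝ)*Real.sqrt N*(δ*Real.sqrt N - 384)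
          = δ*((N:ℝ)*(Real.sqrt N*Real.sqrt N)) - 384*((N:ℝ)*Real.sqrt N) := by ring
      rw [t', hss] at t
      nlinarith [t]
    linarith
  calc δ/48*(N:ℝ)^2 ≤ δ*(N:ℝ)^2/24 - 8*N*Real.sqrt N := hfinal2
    _ ≤ ∑ n ∈ F, (phiB B n : ℝ) := hfinal1
    _ ≤ _ := step1
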